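/- For all integers k, n with 2 < k ≤ n and any m with 1 ≤ m ≤ k, the number of permutations of {1,…,n} that avoid every pattern in T_k^m equals (k-2)!·(k-1)^(n+2-k). -/
import Mathlib


/-- An occurrence of the pattern `τ` in `α` at the strictly increasing
index sequence `f`: the subsequence `α ∘ f` is order-isomorphic to `τ`. -/
def PattOccursAt {k n : ℕ} (τ : Equiv.Perm (Fin k)) (α : Equiv.Perm (Fin n))
    (f : Fin k → Fin n) : Prop :=
  StrictMono f ∧ ∀ i j : Fin k, τ i < τ j ↔ α (f i) < α (f j)

/-- `α` contains the pattern `τ`. -/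
def Contains {k n : ℕ} (τ : Equiv.Perm (Fin k)) (α : Equiv.Perm (Fin n)) : Prop :=
  ∃ f, PattOccursAt τ α f

/-- `α` avoids the pattern `τ`. -/
def Avoids {k n : ℕ} (τ : Equiv.Perm (Fin k)) (α : Equiv.Perm (Fin n)) : Prop :=
  ¬ Contains τ α

/-- `α` contains the pattern `τ` exactly once. -/
def ContainsExactlyOnce {k n : ℕ} (τ : Equiv.Perm (Fin k)) (α : Equiv.Perm (Fin n)) : Prop :=
  ∃! f, PattOccursAt τ α f

/-- `T_k^m`: the permutations `σ` of length `k` with first entry `σ(1) = m`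
(one-based; in `Fin k` terms, `(σ 0) + 1 = m`). -/
def Tkm (k m : ℕ) : Set (Equiv.Perm (Fin k)) :=
  {σ | ∀ i : Fin k, (i : ℕ) = 0 → (σ i : ℕ) + 1 = m}

open Finset

def acnt {n : ℕ} (σ : Equiv.Perm (Fin n)) (i : Fin n) : ℕ :=
  (Finset.univ.filter fun j => i < j ∧ σ j < σ i).card
def bcnt {n : ℕ} (σ : Equiv.Perm (Fin n)) (i : Fin n) : ℕ :=
  (Finset.univ.filter fun j => i < j ∧ σ i < σ j).card
def Good (k m : ℕ) {n : ℕ} (σ : Equiv.Perm (Fin n)) : Prop :=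
  ∀ i : Fin n, ¬ (m - 1 ≤ acnt σ i ∧ k - m ≤ bcnt σ i)
lemma card_lt_perm {k : ℕ} (τ : Equiv.Perm (Fin k)) (c : Fin k) :
    (Finset.univ.filter fun j => τ j < c).card = (c : ℕ) := by
  have h : (Finset.univ.filter fun j => τ j < c) = (Finset.Iio c).map ⟨τ.symm, τ.symm.injective⟩ := by
    ext j; simp [Equiv.symm_apply_eq]
  rw [h, Finset.card_map, Fin.card_Iio]
lemma card_gt_perm {k : ℕ} (τ : Equiv.Perm (Fin k)) (c : Fin k) :
    (Finset.univ.filter fun j => c < τ j).card = k - 1 - (c : ℕ) := by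
  have h : (Finset.univ.filter fun j => c < τ j) = (Finset.Ioi c).map ⟨τ.symm, τ.symm.injective⟩ := by
    ext j; simp [Equiv.symm_apply_eq]
  rw [h, Finset.card_map, Fin.card_Ioi]

lemma avoids_iff_good {k m n : ℕ} (hk : 2 < k) (hm1 : 1 ≤ m) (hmk : m ≤ k)
    (σ : Equiv.Perm (Fin n)) :
    (∀ τ ∈ Tkm k m, Avoids τ σ) ↔ Good k m σ := by
  haveI : NeZero k := ⟨by omega⟩
  constructor
  · -- avoid → good
    intro hav i
    rintro ⟨ha, hb⟩
    -- build an occurrence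
    obtain ⟨S, hSsub, hScard⟩ :=
      Finset.exists_subset_card_eq (s := Finset.univ.filter fun j => i < j ∧ σ j < σ i)
        (n := m - 1) ha
    obtain ⟨T, hTsub, hTcard⟩ :=
      Finset.exists_subset_card_eq (s := Finset.univ.filter fun j => i < j ∧ σ i < σ j)
        (n := k - m) hb
    have hSmem : ∀ x ∈ S, i < x ∧ σ x < σ i := by
      intro x hx; have := hSsub hx; simpa using this
    have hTmem : ∀ x ∈ T, i < x ∧ σ i < σ x := by
      intro x hx; have := hTsub hx; simpa using this
    set F : Finset (Fin n) := insert i (S ∪ T) with hF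
    have hiST : i ∉ S ∪ T := by
      intro h
      rcases Finset.mem_union.mp h with h | h
      · exact absurd (hSmem i h).1 (lt_irrefl i)
      · exact absurd (hTmem i h).1 (lt_irrefl i)
    have hST : Disjoint S T := by
      rw [Finset.disjoint_left]
      intro x hxS hxT
      exact absurd ((hSmem x hxS).2.trans (hTmem x hxT).2) (lt_irrefl _)
    have hFcard : F.card = k := by
      rw [hF, Finset.card_insert_of_notMem hiST, Finset.card_union_of_disjoint hST,
        hScard, hTcard]
      omega
    set f : Fin k → Fin n := fun j => (F.orderIsoOfFin hFcard j : Fin n) with hfdef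
    have hfmono : StrictMono f := fun a b h => by
      exact Subtype.coe_lt_coe.mpr ((F.orderIsoOfFin hFcard).lt_iff_lt.mpr h)
    have hfinj : Function.Injective f := hfmono.injective
    have hfF : ∀ j, f j ∈ F := fun j => (F.orderIsoOfFin hFcard j).2
    have hFmap : F = Finset.univ.map ⟨f, hfinj⟩ := by
      apply (Finset.eq_of_subset_of_card_le ?_ ?_).symm
      · intro x hx
        rcases Finset.mem_map.mp hx with ⟨j, _, rfl⟩
        exact hfF j
      · rw [hFcard, Finset.card_map, Finset.card_univ, Fintype.card_fin]
    -- f 0 = i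
    have hiF : i ∈ F := Finset.mem_insert_self _ _
    have hf0 : f 0 = i := by
      obtain ⟨j0, _, hj0⟩ := Finset.mem_map.mp (hFmap ▸ hiF)
      have h1 : f 0 ≤ i := hj0 ▸ hfmono.monotone (Fin.zero_le (a:=j0))
      have h2 : f 0 = i ∨ f 0 ∈ S ∪ T := by
        have := hfF 0; rw [hF] at this
        simpa using this
      rcases h2 with h | h
      · exact h
      · rcases Finset.mem_union.mp h with h | h
        · exact absurd (lt_of_lt_of_le (hSmem _ h).1 h1) (lt_irrefl i)
        · exact absurd (lt_of_lt_of_le (hTmem _ h).1 h1) (lt_irrefl i)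
    -- image finset
    set G : Finset (Fin n) := F.image σ with hG
    have hGcard : G.card = k := by
      rw [hG, Finset.card_image_of_injective _ σ.injective, hFcard]
    have hmemG : ∀ j, σ (f j) ∈ G := fun j => Finset.mem_image_of_mem σ (hfF j)
    set τf : Fin k → Fin k := fun j => (G.orderIsoOfFin hGcard).symm ⟨σ (f j), hmemG j⟩ with hτf
    have hτinj : Function.Injective τf := by
      intro a b h
      have := (G.orderIsoOfFin hGcard).symm.injective h
      exact hfinj (σ.injective (Subtype.ext_iff.mp this))
    let τ : Equiv.Perm (Fin k) := Equiv.ofBijective τf (Finite.injective_iff_bijective.mp hτinj)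
    have hτiff : ∀ a b : Fin k, τ a < τ b ↔ σ (f a) < σ (f b) := by
      intro a b
      show τf a < τf b ↔ _
      rw [hτf]
      rw [(G.orderIsoOfFin hGcard).symm.lt_iff_lt]
      exact Subtype.coe_lt_coe.symm
    -- τ 0 value
    have hτ0 : (τ 0 : ℕ) = m - 1 := by
      have h1 : (τ 0 : ℕ) = (Finset.univ.filter fun j => τ j < τ 0).card :=
        (card_lt_perm τ (τ 0)).symm
      have h2 : (Finset.univ.filter fun j => τ j < τ 0) =
          (Finset.univ.filter fun j => σ (f j) < σ i) := by
        ext j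
        simp only [Finset.mem_filter, Finset.mem_univ, true_and]
        rw [hτiff, hf0]
      have h3 : (Finset.univ.filter fun j : Fin k => σ (f j) < σ i).card
          = (F.filter fun x => σ x < σ i).card := by
        rw [hFmap, Finset.filter_map, Finset.card_map]
        rfl
      have h4 : (F.filter fun x => σ x < σ i) = S := by
        ext x
        simp only [Finset.mem_filter, hF, Finset.mem_insert, Finset.mem_union]
        constructor
        · rintro ⟨h | h | h, hlt⟩
          · exact absurd (h ▸ hlt) (lt_irrefl _)
          · exact h
          · exact absurd ((hTmem x h).2.trans hlt) (lt_irrefl _)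
        · intro hx
          exact ⟨Or.inr (Or.inl hx), (hSmem x hx).2⟩
      rw [h1, h2, h3, h4, hScard]
    have hτmem : τ ∈ Tkm k m := by
      intro j hj
      have : j = 0 := Fin.ext hj
      rw [this, hτ0]
      omega
    exact hav τ hτmem ⟨f, hfmono, fun a b => hτiff a b⟩
  · -- good → avoid
    intro hg τ hτ
    rintro ⟨f, hfmono, hiff⟩
    have hτ0 : (τ 0 : ℕ) + 1 = m := hτ 0 rfl
    apply hg (f 0)
    constructor
    · -- acnt bound
      have hsub : (Finset.univ.filter fun j : Fin k => τ j < τ 0).map ⟨f, hfmono.injective⟩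
          ⊆ Finset.univ.filter fun j' => f 0 < j' ∧ σ j' < σ (f 0) := by
        intro x hx
        rcases Finset.mem_map.mp hx with ⟨j, hj, rfl⟩
        simp only [Finset.mem_filter, Finset.mem_univ, true_and] at hj ⊢
        have hjne : j ≠ 0 := by intro h; rw [h] at hj; exact lt_irrefl _ hj
        have hj0 : (0 : Fin k) < j := lt_of_le_of_ne (Fin.zero_le (a:=j)) (Ne.symm hjne)
        exact ⟨hfmono hj0, (hiff j 0).mp hj⟩
      have := Finset.card_le_card hsub
      rw [Finset.card_map, card_lt_perm] at this
      calc m - 1 = (τ 0 : ℕ) := by omega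
        _ ≤ _ := this
    · have hsub : (Finset.univ.filter fun j : Fin k => τ 0 < τ j).map ⟨f, hfmono.injective⟩
          ⊆ Finset.univ.filter fun j' => f 0 < j' ∧ σ (f 0) < σ j' := by
        intro x hx
        rcases Finset.mem_map.mp hx with ⟨j, hj, rfl⟩
        simp only [Finset.mem_filter, Finset.mem_univ, true_and] at hj ⊢
        have hjne : j ≠ 0 := by intro h; rw [h] at hj; exact lt_irrefl _ hj
        have hj0 : (0 : Fin k) < j := lt_of_le_of_ne (Fin.zero_le (a:=j)) (Ne.symm hjne)
        exact ⟨hfmono hj0, (hiff 0 j).mp hj⟩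
      have := Finset.card_le_card hsub
      rw [Finset.card_map, card_gt_perm] at this
      have hτk : (τ 0 : ℕ) < k := (τ 0).2
      calc k - m = k - 1 - (τ 0 : ℕ) := by omega
        _ ≤ _ := this

lemma card_fin_filter (N : ℕ) (p : ℕ → Prop) [DecidablePred p] :
    (Finset.univ.filter fun v : Fin N => p v.val).card = ((Finset.range N).filter p).card := by
  rw [← Nat.Iio_eq_range, ← Fin.map_valEmbedding_univ, Finset.filter_map, Finset.card_map]
  rfl

lemma card_val_lt (N c : ℕ) (hc : c ≤ N) :
    (Finset.univ.filter fun y : Fin N => (y : ℕ) < c).card = c := by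
  refine (card_fin_filter N (fun x => x < c)).trans ?_
  have h : (Finset.range N).filter (fun x => x < c) = Finset.range c := by
    ext x; simp only [Finset.mem_filter, Finset.mem_range]; omega
  rw [h, Finset.card_range]

lemma card_val_ge (N c : ℕ) :
    (Finset.univ.filter fun y : Fin N => c ≤ (y : ℕ)).card = N - c := by
  refine (card_fin_filter N (fun x => c ≤ x)).trans ?_
  have h : (Finset.range N).filter (fun x => c ≤ x) = Finset.Ico c N := by
    ext x; simp only [Finset.mem_filter, Finset.mem_range, Finset.mem_Ico]; omega
  rw [h, Nat.card_Ico]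

lemma card_filter_comp_perm {α : Type*} [Fintype α] [DecidableEq α] (π : Equiv.Perm α)
    (p : α → Prop) [DecidablePred p] :
    (Finset.univ.filter fun x => p (π x)).card = (Finset.univ.filter p).card := by
  have h : (Finset.univ.filter fun x => p (π x))
      = (Finset.univ.filter p).map ⟨π.symm, π.symm.injective⟩ := by
    ext x
    simp [Equiv.symm_apply_eq]
  rw [h, Finset.card_map]

section Ins
variable {n : ℕ}

def insFun (v : Fin (n+1)) (π : Equiv.Perm (Fin n)) : Fin (n+1) → Fin (n+1) :=
  Fin.cases v (fun j => v.succAbove (π j))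

@[simp] lemma insFun_zero (v : Fin (n+1)) (π : Equiv.Perm (Fin n)) : insFun v π 0 = v := rfl

@[simp] lemma insFun_succ (v : Fin (n+1)) (π : Equiv.Perm (Fin n)) (j : Fin n) :
    insFun v π j.succ = v.succAbove (π j) := by
  simp [insFun]

lemma insFun_injective (v : Fin (n+1)) (π : Equiv.Perm (Fin n)) :
    Function.Injective (insFun v π) := by
  intro a b h
  induction a using Fin.cases with
  | zero =>
    induction b using Fin.cases with
    | zero => rfl
    | succ j => rw [insFun_zero, insFun_succ] at h; exact absurd h.symm (Fin.succAbove_ne v (π j))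
  | succ i =>
    induction b using Fin.cases with
    | zero => rw [insFun_zero, insFun_succ] at h; exact absurd h (Fin.succAbove_ne v (π i))
    | succ j =>
      rw [insFun_succ, insFun_succ] at h
      have := π.injective (Fin.succAbove_right_injective h)
      rw [this]

noncomputable def insPerm (v : Fin (n+1)) (π : Equiv.Perm (Fin n)) : Equiv.Perm (Fin (n+1)) :=
  Equiv.ofBijective _ (Finite.injective_iff_bijective.mp (insFun_injective v π))

@[simp] lemma insPerm_apply (v : Fin (n+1)) (π : Equiv.Perm (Fin n)) (x : Fin (n+1)) :
    insPerm v π x = insFun v π x := rfl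

lemma acnt_insPerm_zero (v : Fin (n+1)) (π : Equiv.Perm (Fin n)) :
    acnt (insPerm v π) 0 = (v : ℕ) := by
  unfold acnt
  have h : (Finset.univ.filter fun j : Fin (n+1) => 0 < j ∧ insPerm v π j < insPerm v π 0)
      = (Finset.univ.filter fun j : Fin n => (π j : ℕ) < (v : ℕ)).map
          ⟨Fin.succ, Fin.succ_injective n⟩ := by
    ext x
    simp only [Finset.mem_filter, Finset.mem_univ, true_and, Finset.mem_map,
      Function.Embedding.coeFn_mk]
    constructor
    · rintro ⟨hpos, hlt⟩
      obtain ⟨j, rfl⟩ := Fin.eq_succ_of_ne_zero (Fin.pos_iff_ne_zero.mp hpos)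
      refine ⟨j, ?_, rfl⟩
      rw [insPerm_apply, insPerm_apply, insFun_succ, insFun_zero] at hlt
      have := (Fin.succAbove_lt_iff_castSucc_lt v (π j)).mp hlt
      exact this
    · rintro ⟨j, hj, rfl⟩
      refine ⟨Fin.succ_pos j, ?_⟩
      rw [insPerm_apply, insPerm_apply, insFun_succ, insFun_zero]
      exact (Fin.succAbove_lt_iff_castSucc_lt v (π j)).mpr hj
  rw [h, Finset.card_map]
  rw [card_filter_comp_perm π (fun y => (y : ℕ) < (v : ℕ))]
  exact card_val_lt n v (Nat.lt_succ_iff.mp v.2)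

lemma bcnt_insPerm_zero (v : Fin (n+1)) (π : Equiv.Perm (Fin n)) :
    bcnt (insPerm v π) 0 = n - (v : ℕ) := by
  unfold bcnt
  have h : (Finset.univ.filter fun j : Fin (n+1) => 0 < j ∧ insPerm v π 0 < insPerm v π j)
      = (Finset.univ.filter fun j : Fin n => (v : ℕ) ≤ (π j : ℕ)).map
          ⟨Fin.succ, Fin.succ_injective n⟩ := by
    ext x
    simp only [Finset.mem_filter, Finset.mem_univ, true_and, Finset.mem_map,
      Function.Embedding.coeFn_mk]
    constructor
    · rintro ⟨hpos, hlt⟩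
      obtain ⟨j, rfl⟩ := Fin.eq_succ_of_ne_zero (Fin.pos_iff_ne_zero.mp hpos)
      refine ⟨j, ?_, rfl⟩
      rw [insPerm_apply, insPerm_apply, insFun_succ, insFun_zero] at hlt
      exact (Fin.lt_succAbove_iff_le_castSucc v (π j)).mp hlt
    · rintro ⟨j, hj, rfl⟩
      refine ⟨Fin.succ_pos j, ?_⟩
      rw [insPerm_apply, insPerm_apply, insFun_succ, insFun_zero]
      exact (Fin.lt_succAbove_iff_le_castSucc v (π j)).mpr hj
  rw [h, Finset.card_map]
  rw [card_filter_comp_perm π (fun y => (v : ℕ) ≤ (y : ℕ))]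
  exact card_val_ge n v

lemma acnt_insPerm_succ (v : Fin (n+1)) (π : Equiv.Perm (Fin n)) (i : Fin n) :
    acnt (insPerm v π) i.succ = acnt π i := by
  unfold acnt
  have h : (Finset.univ.filter fun j : Fin (n+1) => i.succ < j ∧ insPerm v π j < insPerm v π i.succ)
      = (Finset.univ.filter fun j : Fin n => i < j ∧ π j < π i).map
          ⟨Fin.succ, Fin.succ_injective n⟩ := by
    ext x
    simp only [Finset.mem_filter, Finset.mem_univ, true_and, Finset.mem_map,
      Function.Embedding.coeFn_mk]
    constructor
    · rintro ⟨hpos, hlt⟩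
      have hx0 : x ≠ 0 := by
        intro h0; rw [h0] at hpos; exact absurd hpos (Fin.not_lt.mpr (Fin.zero_le _))
      obtain ⟨j, rfl⟩ := Fin.eq_succ_of_ne_zero hx0
      refine ⟨j, ⟨Fin.succ_lt_succ_iff.mp hpos, ?_⟩, rfl⟩
      rw [insPerm_apply, insPerm_apply, insFun_succ, insFun_succ] at hlt
      exact (Fin.strictMono_succAbove v).lt_iff_lt.mp hlt
    · rintro ⟨j, ⟨hij, hlt⟩, rfl⟩
      refine ⟨Fin.succ_lt_succ_iff.mpr hij, ?_⟩
      rw [insPerm_apply, insPerm_apply, insFun_succ, insFun_succ]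
      exact (Fin.strictMono_succAbove v) hlt
  rw [h, Finset.card_map]

lemma bcnt_insPerm_succ (v : Fin (n+1)) (π : Equiv.Perm (Fin n)) (i : Fin n) :
    bcnt (insPerm v π) i.succ = bcnt π i := by
  unfold bcnt
  have h : (Finset.univ.filter fun j : Fin (n+1) => i.succ < j ∧ insPerm v π i.succ < insPerm v π j)
      = (Finset.univ.filter fun j : Fin n => i < j ∧ π i < π j).map
          ⟨Fin.succ, Fin.succ_injective n⟩ := by
    ext x
    simp only [Finset.mem_filter, Finset.mem_univ, true_and, Finset.mem_map,
      Function.Embedding.coeFn_mk]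
    constructor
    · rintro ⟨hpos, hlt⟩
      have hx0 : x ≠ 0 := by
        intro h0; rw [h0] at hpos; exact absurd hpos (Fin.not_lt.mpr (Fin.zero_le _))
      obtain ⟨j, rfl⟩ := Fin.eq_succ_of_ne_zero hx0
      refine ⟨j, ⟨Fin.succ_lt_succ_iff.mp hpos, ?_⟩, rfl⟩
      rw [insPerm_apply, insPerm_apply, insFun_succ, insFun_succ] at hlt
      exact (Fin.strictMono_succAbove v).lt_iff_lt.mp hlt
    · rintro ⟨j, ⟨hij, hlt⟩, rfl⟩
      refine ⟨Fin.succ_lt_succ_iff.mpr hij, ?_⟩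
      rw [insPerm_apply, insPerm_apply, insFun_succ, insFun_succ]
      exact (Fin.strictMono_succAbove v) hlt
  rw [h, Finset.card_map]

lemma good_insPerm (k m : ℕ) (v : Fin (n+1)) (π : Equiv.Perm (Fin n)) :
    Good k m (insPerm v π) ↔
      (¬ (m - 1 ≤ (v : ℕ) ∧ k - m ≤ n - (v : ℕ))) ∧ Good k m π := by
  constructor
  · intro hg
    refine ⟨?_, ?_⟩
    · have := hg 0
      rwa [acnt_insPerm_zero, bcnt_insPerm_zero] at this
    · intro i
      have := hg i.succ
      rwa [acnt_insPerm_succ, bcnt_insPerm_succ] at this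
  · rintro ⟨h0, hπ⟩ i
    induction i using Fin.cases with
    | zero => rwa [acnt_insPerm_zero, bcnt_insPerm_zero]
    | succ j => rw [acnt_insPerm_succ, bcnt_insPerm_succ]; exact hπ j

noncomputable def goodEquiv (k m : ℕ) :
    ({v : Fin (n+1) // ¬ (m - 1 ≤ (v : ℕ) ∧ k - m ≤ n - (v : ℕ))} ×
      {π : Equiv.Perm (Fin n) // Good k m π}) ≃
    {σ : Equiv.Perm (Fin (n+1)) // Good k m σ} := by
  apply Equiv.ofBijective
    (fun p => ⟨insPerm p.1.1 p.2.1, (good_insPerm k m p.1.1 p.2.1).mpr ⟨p.1.2, p.2.2⟩⟩)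
  constructor
  · rintro ⟨⟨v, hv⟩, ⟨π, hπ⟩⟩ ⟨⟨v', hv'⟩, ⟨π', hπ'⟩⟩ h
    have heq : insPerm v π = insPerm v' π' := congrArg Subtype.val h
    have hv0 : v = v' := by
      have := congrArg (fun σ : Equiv.Perm (Fin (n+1)) => σ 0) heq
      simpa using this
    subst hv0
    have hπeq : π = π' := by
      apply Equiv.ext
      intro j
      have := congrArg (fun σ : Equiv.Perm (Fin (n+1)) => σ j.succ) heq
      simp only [insPerm_apply, insFun_succ] at this
      exact Fin.succAbove_right_injective this
    subst hπeq
    rfl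
  · rintro ⟨σ, hσ⟩
    have hne : ∀ j : Fin n, σ j.succ ≠ σ 0 := fun j h =>
      Fin.succ_ne_zero j (σ.injective h)
    choose g hg using fun j : Fin n => Fin.exists_succAbove_eq (hne j)
    have hginj : Function.Injective g := by
      intro a b h
      have : σ a.succ = σ b.succ := by rw [← hg a, ← hg b, h]
      exact Fin.succ_injective n (σ.injective this)
    let π : Equiv.Perm (Fin n) := Equiv.ofBijective g (Finite.injective_iff_bijective.mp hginj)
    have hins : insPerm (σ 0) π = σ := by
      apply Equiv.ext
      intro x
      induction x using Fin.cases with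
      | zero => simp
      | succ j =>
        rw [insPerm_apply, insFun_succ]
        exact hg j
    have hgood : Good k m (insPerm (σ 0) π) := hins ▸ hσ
    obtain ⟨h1, h2⟩ := (good_insPerm k m (σ 0) π).mp hgood
    exact ⟨⟨⟨σ 0, h1⟩, ⟨π, h2⟩⟩, Subtype.ext hins⟩

end Ins

noncomputable def Ngood (k m j : ℕ) : ℕ := Nat.card {σ : Equiv.Perm (Fin j) // Good k m σ}

lemma cardv (k m n : ℕ) (hk : 2 < k) (hm1 : 1 ≤ m) (hmk : m ≤ k) :
    Nat.card {v : Fin (n+1) // ¬ (m - 1 ≤ (v : ℕ) ∧ k - m ≤ n - (v : ℕ))}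
      = min (n+1) (k-1) := by
  rw [Nat.card_eq_fintype_card, Fintype.card_subtype]
  refine (card_fin_filter (n+1) (fun x => ¬ (m - 1 ≤ x ∧ k - m ≤ n - x))).trans ?_
  rcases le_or_gt (n+1) (k-1) with hcase | hcase
  · have h : (Finset.range (n+1)).filter (fun x => ¬ (m - 1 ≤ x ∧ k - m ≤ n - x))
        = Finset.range (n+1) := by
      apply Finset.filter_true_of_mem
      intro x hx
      rw [Finset.mem_range] at hx
      omega
    rw [h, Finset.card_range]
    omega
  · have hpos : (Finset.range (n+1)).filter (fun x => m - 1 ≤ x ∧ k - m ≤ n - x)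
        = Finset.Icc (m-1) (n-(k-m)) := by
      ext x
      simp only [Finset.mem_filter, Finset.mem_range, Finset.mem_Icc]
      omega
    have htot := Finset.card_filter_add_card_filter_not
      (s := Finset.range (n+1)) (p := fun x => m - 1 ≤ x ∧ k - m ≤ n - x)
    rw [hpos, Nat.card_Icc, Finset.card_range] at htot
    omega

lemma Ngood_succ (k m : ℕ) (hk : 2 < k) (hm1 : 1 ≤ m) (hmk : m ≤ k) (n : ℕ) :
    Ngood k m (n+1) = min (n+1) (k-1) * Ngood k m n := by
  rw [Ngood, ← Nat.card_congr (goodEquiv (n := n) k m), Nat.card_prod,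
    cardv k m n hk hm1 hmk]
  rfl

lemma Ngood_le (k m : ℕ) (hk : 2 < k) (hm1 : 1 ≤ m) (hmk : m ≤ k) :
    ∀ j, j ≤ k - 1 → Ngood k m j = Nat.factorial j := by
  intro j
  induction j with
  | zero =>
    intro _
    have hall : ∀ σ : Equiv.Perm (Fin 0), Good k m σ := fun σ i => i.elim0
    rw [Ngood, Nat.card_congr (Equiv.subtypeUnivEquiv hall), Nat.card_eq_fintype_card]
    simp
  | succ j ih =>
    intro hj
    rw [Ngood_succ k m hk hm1 hmk j, ih (by omega), Nat.factorial_succ]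
    congr 1
    omega

lemma Ngood_ge (k m : ℕ) (hk : 2 < k) (hm1 : 1 ≤ m) (hmk : m ≤ k) :
    ∀ d, Ngood k m (k - 1 + d) = (k-1)^d * Nat.factorial (k-1) := by
  intro d
  induction d with
  | zero => simpa using Ngood_le k m hk hm1 hmk (k-1) le_rfl
  | succ d ih =>
    have h : k - 1 + (d + 1) = (k - 1 + d) + 1 := by omega
    rw [h, Ngood_succ k m hk hm1 hmk, ih]
    have hmin : min (k - 1 + d + 1) (k - 1) = k - 1 := by omega
    rw [hmin, pow_succ]
    ring

theorem stmt0 (k m n : ℕ) (hk : 2 < k) (hkn : k ≤ n) (hm1 : 1 ≤ m) (hmk : m ≤ k) :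
    Set.ncard {α : Equiv.Perm (Fin n) | ∀ τ ∈ Tkm k m, Avoids τ α}
      = Nat.factorial (k - 2) * (k - 1) ^ (n + 2 - k) := by
  have hset : {α : Equiv.Perm (Fin n) | ∀ τ ∈ Tkm k m, Avoids τ α}
      = {α : Equiv.Perm (Fin n) | Good k m α} :=
    Set.ext fun σ => avoids_iff_good hk hm1 hmk σ
  rw [hset, ← Nat.card_coe_set_eq]
  have hN : Nat.card {α : Equiv.Perm (Fin n) | Good k m α} = Ngood k m n := rfl
  rw [hN]
  have hn : n = k - 1 + (n - (k - 1)) := by omega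
  rw [hn, Ngood_ge k m hk hm1 hmk]
  have h1 : Nat.factorial (k-1) = (k-1) * Nat.factorial (k-2) := by
    rw [show k - 1 = (k-2)+1 from by omega, Nat.factorial_succ]
  have h2 : k - 1 + (n - (k - 1)) + 2 - k = (n - (k-1)) + 1 := by omega
  rw [h1, h2, pow_succ]
  ring
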